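/- Let d ≥ 5, let z be a point chosen uniformly at random from the unit sphere {z ∈ ℝ^d : ‖z‖ = 1}, and let w ∈ ℝ^d be a fixed unit vector. If 0 ≤ t ≤ 1/(1370·d²), then for every s ∈ ℝ, the probability that ⟨w, z⟩ ∈ [s, s+t] is at most 1/10. -/

import Mathlib

open MeasureTheory
open scoped ENNReal RealInnerProductSpace

noncomputable section

open Set Metric
open scoped Pointwise

section Aux

lemma g_deriv {r : ℝ} (hr : 0 < r) (a : ℝ) :
    HasDerivAt (fun x => x / Real.sqrt (x ^ 2 + r ^ 2))
      (r ^ 2 / ((a ^ 2 + r ^ 2) * Real.sqrt (a ^ 2 + r ^ 2))) a := by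
  have hpos : (0:ℝ) < a ^ 2 + r ^ 2 := by positivity
  have hu : HasDerivAt (fun x : ℝ => x ^ 2 + r ^ 2) (2 * a) a := by
    simpa using ((hasDerivAt_pow 2 a).add_const (r ^ 2))
  have hs : HasDerivAt (fun x : ℝ => Real.sqrt (x ^ 2 + r ^ 2))
      (1 / (2 * Real.sqrt (a ^ 2 + r ^ 2)) * (2 * a)) a :=
    (Real.hasDerivAt_sqrt hpos.ne').comp a hu
  have hsa : Real.sqrt (a ^ 2 + r ^ 2) ≠ 0 := (Real.sqrt_pos.2 hpos).ne'
  have hsq : Real.sqrt (a ^ 2 + r ^ 2) ^ 2 = a ^ 2 + r ^ 2 := Real.sq_sqrt hpos.le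
  have : HasDerivAt (fun x => x / Real.sqrt (x ^ 2 + r ^ 2)) _ a := (hasDerivAt_id a).div hs hsa
  convert this using 1
  rw [id, hsq]
  field_simp
  linear_combination -hsq

/-- key monotonicity: `a ↦ a/√(a²+r²)` grows at rate at least `r²` inside the unit disc. -/
lemma g_grow {r : ℝ} (hr : 0 < r) {a₁ a₂ : ℝ} (h1 : a₁ ^ 2 + r ^ 2 ≤ 1)
    (h2 : a₂ ^ 2 + r ^ 2 ≤ 1) (h12 : a₁ ≤ a₂) :
    r ^ 2 * (a₂ - a₁) ≤ a₂ / Real.sqrt (a₂ ^ 2 + r ^ 2) - a₁ / Real.sqrt (a₁ ^ 2 + r ^ 2) := by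
  set c := Real.sqrt (1 - r ^ 2) with hc
  have hc0 : 0 ≤ c := Real.sqrt_nonneg _
  have hcsq : c ^ 2 = 1 - r ^ 2 := Real.sq_sqrt (by nlinarith)
  have hmem : ∀ a : ℝ, a ^ 2 + r ^ 2 ≤ 1 → a ∈ Icc (-c) c := by
    intro a ha
    constructor
    · nlinarith [sq_nonneg (a + c)]
    · nlinarith [sq_nonneg (a - c)]
  have hmem' : ∀ a : ℝ, a ∈ Icc (-c) c → a ^ 2 + r ^ 2 ≤ 1 := by
    intro a ⟨ha1, ha2⟩; nlinarith
  have hcont : ContinuousOn (fun x : ℝ => x / Real.sqrt (x ^ 2 + r ^ 2)) (Icc (-c) c) :=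
    fun a _ => ((g_deriv hr a).continuousAt).continuousWithinAt
  have hdiff : DifferentiableOn ℝ (fun x : ℝ => x / Real.sqrt (x ^ 2 + r ^ 2))
      (interior (Icc (-c) c)) := fun a _ => ((g_deriv hr a).differentiableAt).differentiableWithinAt
  have hbound : ∀ a ∈ interior (Icc (-c) c),
      r ^ 2 ≤ deriv (fun x : ℝ => x / Real.sqrt (x ^ 2 + r ^ 2)) a := by
    intro a ha
    rw [interior_Icc] at ha
    have ha' : a ^ 2 + r ^ 2 ≤ 1 := hmem' a ⟨ha.1.le, ha.2.le⟩
    rw [(g_deriv hr a).deriv]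
    have hpos : (0:ℝ) < a ^ 2 + r ^ 2 := by positivity
    have hs1 : Real.sqrt (a ^ 2 + r ^ 2) ≤ 1 := by
      rw [show (1:ℝ) = Real.sqrt 1 by simp]
      exact Real.sqrt_le_sqrt ha'
    have hs0 : 0 < Real.sqrt (a ^ 2 + r ^ 2) := Real.sqrt_pos.2 hpos
    rw [le_div_iff₀ (by positivity)]
    have hm : (a ^ 2 + r ^ 2) * Real.sqrt (a ^ 2 + r ^ 2) ≤ 1 :=
      mul_le_one₀ ha' hs0.le hs1
    nlinarith [sq_nonneg r, mul_le_mul_of_nonneg_left hm (sq_nonneg r)]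
  have := (convex_Icc (-c) c).mul_sub_le_image_sub_of_le_deriv hcont hdiff hbound
    a₁ (hmem _ h1) a₂ (hmem _ h2) h12
  simpa using this

variable {n : ℕ}

def coneSet (n : ℕ) (s t : ℝ) : Set (ℝ × EuclideanSpace ℝ (Fin n)) :=
  {p | 0 < Real.sqrt (p.1 ^ 2 + ‖p.2‖ ^ 2) ∧ Real.sqrt (p.1 ^ 2 + ‖p.2‖ ^ 2) < 1 ∧
    s * Real.sqrt (p.1 ^ 2 + ‖p.2‖ ^ 2) ≤ p.1 ∧ p.1 ≤ (s + t) * Real.sqrt (p.1 ^ 2 + ‖p.2‖ ^ 2)}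


/-- slice bound -/



lemma slice_bound (s t : ℝ) (ht0 : 0 ≤ t) (y : EuclideanSpace ℝ (Fin n)) :
    volume {a : ℝ | (a, y) ∈ coneSet n s t} ≤
      Set.indicator (ball (0 : EuclideanSpace ℝ (Fin n)) 4⁻¹) (fun _ => 2) y +
      Set.indicator (ball (0 : EuclideanSpace ℝ (Fin n)) 1) (fun _ => ENNReal.ofReal (32 * t)) y := by
  set r := ‖y‖ with hrdef
  have hr0 : 0 ≤ r := norm_nonneg _
  -- facts about members
  have hmem : ∀ a : ℝ, (a, y) ∈ coneSet n s t →
      a ^ 2 + r ^ 2 < 1 ∧ s ≤ a / Real.sqrt (a ^ 2 + r ^ 2) ∧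
        a / Real.sqrt (a ^ 2 + r ^ 2) ≤ s + t := by
    intro a ⟨h1, h2, h3, h4⟩
    have hlt : a ^ 2 + r ^ 2 < 1 := by
      nlinarith [Real.sq_sqrt (show (0:ℝ) ≤ a ^ 2 + r ^ 2 by positivity), h2,
        Real.sqrt_nonneg (a ^ 2 + r ^ 2)]
    refine ⟨hlt, ?_, ?_⟩
    · rw [le_div_iff₀ h1]; linarith [h3]
    · rw [div_le_iff₀ h1]; linarith [h4]
  rcases le_or_gt 1 r with hr1 | hr1
  · have : {a : ℝ | (a, y) ∈ coneSet n s t} = ∅ := by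
      ext a
      simp only [mem_setOf_eq, mem_empty_iff_false, iff_false]
      intro h
      have := (hmem a h).1
      nlinarith [sq_nonneg a]
    simp [this]
  · have hy1 : y ∈ ball (0 : EuclideanSpace ℝ (Fin n)) 1 := by
      simpa [mem_ball_zero_iff] using hr1
    rcases lt_or_ge r 4⁻¹ with hr4 | hr4
    · -- small radius: bound by 2
      have hy4 : y ∈ ball (0 : EuclideanSpace ℝ (Fin n)) 4⁻¹ := by
        simpa [mem_ball_zero_iff] using hr4
      have hsub : {a : ℝ | (a, y) ∈ coneSet n s t} ⊆ Ioo (-1 : ℝ) 1 := by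
        intro a ha
        have := (hmem a ha).1
        constructor <;> nlinarith [sq_nonneg r]
      calc volume {a : ℝ | (a, y) ∈ coneSet n s t} ≤ volume (Ioo (-1 : ℝ) 1) :=
            measure_mono hsub
        _ = 2 := by rw [Real.volume_Ioo]; norm_num
        _ ≤ _ := by
            rw [Set.indicator_of_mem hy4, Set.indicator_of_mem hy1]
            exact le_add_right le_rfl
    · -- big radius: bound by 32 t
      have hrpos : 0 < r := lt_of_lt_of_le (by norm_num) hr4
      have key : volume {a : ℝ | (a, y) ∈ coneSet n s t} ≤ ENNReal.ofReal (32 * t) := by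
        rcases Set.eq_empty_or_nonempty {a : ℝ | (a, y) ∈ coneSet n s t} with he | ⟨a₀, ha₀⟩
        · simp [he]
        · have hsub : {a : ℝ | (a, y) ∈ coneSet n s t} ⊆
              Icc (a₀ - t / r ^ 2) (a₀ + t / r ^ 2) := by
            intro a ha
            have Ha := hmem a ha
            have Ha₀ := hmem a₀ ha₀
            have htr : 0 ≤ t / r ^ 2 := by positivity
            rcases le_total a a₀ with hle | hle
            · have := g_grow hrpos Ha.1.le Ha₀.1.le hle
              have hdiff : a₀ / Real.sqrt (a₀ ^ 2 + r ^ 2) - a / Real.sqrt (a ^ 2 + r ^ 2) ≤ t := by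
                linarith [Ha.2.1, Ha₀.2.2]
              have : r ^ 2 * (a₀ - a) ≤ t := le_trans this hdiff
              have h' : a₀ - a ≤ t / r ^ 2 := by
                rw [le_div_iff₀ (by positivity)]; nlinarith
              constructor <;> linarith
            · have := g_grow hrpos Ha₀.1.le Ha.1.le hle
              have hdiff : a / Real.sqrt (a ^ 2 + r ^ 2) - a₀ / Real.sqrt (a₀ ^ 2 + r ^ 2) ≤ t := by
                linarith [Ha₀.2.1, Ha.2.2]
              have hkey : r ^ 2 * (a - a₀) ≤ t := le_trans this hdiff
              have h' : a - a₀ ≤ t / r ^ 2 := by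
                rw [le_div_iff₀ (by positivity)]; nlinarith
              constructor <;> linarith
          calc volume {a : ℝ | (a, y) ∈ coneSet n s t}
              ≤ volume (Icc (a₀ - t / r ^ 2) (a₀ + t / r ^ 2)) := measure_mono hsub
            _ = ENNReal.ofReal (2 * (t / r ^ 2)) := by rw [Real.volume_Icc]; ring_nf
            _ ≤ ENNReal.ofReal (32 * t) := by
                apply ENNReal.ofReal_le_ofReal
                have hr2 : (1:ℝ)/16 ≤ r ^ 2 := by nlinarith
                have h' : t / r ^ 2 ≤ 16 * t := by
                  rw [div_le_iff₀ (by positivity)]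
                  nlinarith [mul_le_mul_of_nonneg_left hr2 ht0]
                linarith
      calc volume {a : ℝ | (a, y) ∈ coneSet n s t} ≤ ENNReal.ofReal (32 * t) := key
        _ ≤ _ := by rw [Set.indicator_of_mem hy1]; exact le_add_left le_rfl

def ballSet (n : ℕ) : Set (ℝ × EuclideanSpace ℝ (Fin n)) :=
  {p | Real.sqrt (p.1 ^ 2 + ‖p.2‖ ^ 2) < 1}

lemma cont_nr : Continuous fun p : ℝ × EuclideanSpace ℝ (Fin n) =>
    Real.sqrt (p.1 ^ 2 + ‖p.2‖ ^ 2) := by fun_prop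

lemma coneSet_measurable (s t : ℝ) : MeasurableSet (coneSet n s t) := by
  have h1 := cont_nr (n := n) |>.measurable
  have h2 : Measurable fun p : ℝ × EuclideanSpace ℝ (Fin n) => p.1 := measurable_fst
  exact (measurableSet_lt measurable_const h1).inter ((measurableSet_lt h1 measurable_const).inter
    ((measurableSet_le (h1.const_mul s) h2).inter (measurableSet_le h2 (h1.const_mul (s + t)))))

lemma ballSet_measurable : MeasurableSet (ballSet n) :=
  measurableSet_lt cont_nr.measurable measurable_const

lemma cone_vol_le (s t : ℝ) (ht0 : 0 ≤ t)
    (hslice : ∀ y : EuclideanSpace ℝ (Fin n),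
      volume {a : ℝ | (a, y) ∈ coneSet n s t} ≤
        Set.indicator (ball (0 : EuclideanSpace ℝ (Fin n)) 4⁻¹) (fun _ => 2) y +
        Set.indicator (ball (0 : EuclideanSpace ℝ (Fin n)) 1)
          (fun _ => ENNReal.ofReal (32 * t)) y) :
    (volume : Measure ℝ).prod volume (coneSet n s t) ≤
      2 * volume (ball (0 : EuclideanSpace ℝ (Fin n)) 4⁻¹) +
      ENNReal.ofReal (32 * t) * volume (ball (0 : EuclideanSpace ℝ (Fin n)) 1) := by
  rw [Measure.prod_apply_symm (coneSet_measurable s t)]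
  calc ∫⁻ y, volume ((fun a => (a, y)) ⁻¹' coneSet n s t) ∂volume
      ≤ ∫⁻ y, (Set.indicator (ball (0 : EuclideanSpace ℝ (Fin n)) 4⁻¹) (fun _ => 2) y +
        Set.indicator (ball (0 : EuclideanSpace ℝ (Fin n)) 1)
          (fun _ => ENNReal.ofReal (32 * t)) y) ∂volume := lintegral_mono fun y => hslice y
    _ = 2 * volume (ball (0 : EuclideanSpace ℝ (Fin n)) 4⁻¹) +
        ENNReal.ofReal (32 * t) * volume (ball (0 : EuclideanSpace ℝ (Fin n)) 1) := by
        rw [lintegral_add_left (measurable_const.indicator measurableSet_ball),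
          lintegral_indicator_const measurableSet_ball,
          lintegral_indicator_const measurableSet_ball]

lemma ball_vol_lower (hn : 1 ≤ n) :
    ENNReal.ofReal (2 / ((n : ℝ) + 1)) * volume (ball (0 : EuclideanSpace ℝ (Fin n)) 1) ≤
      (volume : Measure ℝ).prod volume (ballSet n) := by
  set m : ℝ := (n : ℝ) + 1 with hm
  have hm2 : (2:ℝ) ≤ m := by
    have : (1:ℝ) ≤ (n : ℝ) := by exact_mod_cast hn
    linarith
  have hm0 : (0:ℝ) < m := by linarith
  set ρ : ℝ := Real.sqrt (1 - 1 / m) with hρ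
  set c : ℝ := Real.sqrt (1 / m) with hc
  have hρ0 : 0 ≤ ρ := Real.sqrt_nonneg _
  have hc0 : 0 ≤ c := Real.sqrt_nonneg _
  have hρsq : ρ ^ 2 = 1 - 1 / m := Real.sq_sqrt (by rw [sub_nonneg, div_le_one hm0]; linarith)
  have hcsq : c ^ 2 = 1 / m := Real.sq_sqrt (by positivity)
  haveI : Nontrivial (EuclideanSpace ℝ (Fin n)) := by
    rw [← Module.finrank_pos_iff (R := ℝ), finrank_euclideanSpace_fin]; omega
  rw [Measure.prod_apply_symm ballSet_measurable]
  have key : ∀ y : EuclideanSpace ℝ (Fin n),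
      Set.indicator (ball (0 : EuclideanSpace ℝ (Fin n)) ρ)
        (fun _ => ENNReal.ofReal (2 * c)) y ≤ volume ((fun a => (a, y)) ⁻¹' ballSet n) := by
    intro y
    by_cases hy : y ∈ ball (0 : EuclideanSpace ℝ (Fin n)) ρ
    · rw [Set.indicator_of_mem hy]
      have hr : ‖y‖ < ρ := by simpa [mem_ball_zero_iff] using hy
      have hy0 : (0:ℝ) ≤ ‖y‖ := norm_nonneg _
      have hsub : Ioo (-c) c ⊆ (fun a => (a, y)) ⁻¹' ballSet n := by
        intro a ⟨h1, h2⟩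
        show Real.sqrt (a ^ 2 + ‖y‖ ^ 2) < 1
        rw [Real.sqrt_lt' one_pos]
        nlinarith
      calc ENNReal.ofReal (2 * c) = volume (Ioo (-c) c) := by
            rw [Real.volume_Ioo]; congr 1; ring
        _ ≤ _ := measure_mono hsub
    · rw [Set.indicator_of_notMem hy]; exact bot_le
  have hρn : c ≤ ρ ^ n := by
    have hpow : (ρ ^ n) ^ 2 = (1 - 1 / m) ^ n := by
      rw [← pow_mul, mul_comm, pow_mul, hρsq]
    have hbern : 1 / m ≤ (1 - 1 / m) ^ n := by
      have h1 : (1:ℝ) + (n : ℝ) * (-(1 / m)) ≤ (1 + (-(1 / m))) ^ n :=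
        one_add_mul_le_pow (by nlinarith) n
      have h2 : (1:ℝ) - (n : ℝ) / m = 1 / m := by
        rw [hm]; field_simp; ring
      calc (1:ℝ) / m = 1 - (n : ℝ) / m := h2.symm
        _ = 1 + (n : ℝ) * (-(1 / m)) := by ring
        _ ≤ (1 + (-(1 / m))) ^ n := h1
        _ = (1 - 1 / m) ^ n := by ring_nf
    calc c = Real.sqrt (1 / m) := hc
      _ ≤ Real.sqrt ((ρ ^ n) ^ 2) := Real.sqrt_le_sqrt (by rw [hpow]; exact hbern)
      _ = ρ ^ n := Real.sqrt_sq (pow_nonneg hρ0 n)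
  have hcoef : ENNReal.ofReal (2 / m) ≤ ENNReal.ofReal (2 * c) * ENNReal.ofReal (ρ ^ n) := by
    rw [← ENNReal.ofReal_mul (by positivity)]
    apply ENNReal.ofReal_le_ofReal
    have h2m : 2 / m = 2 * c ^ 2 := by rw [hcsq]; ring
    nlinarith [mul_le_mul_of_nonneg_left hρn (by positivity : (0:ℝ) ≤ 2 * c)]
  calc ENNReal.ofReal (2 / m) * volume (ball (0 : EuclideanSpace ℝ (Fin n)) 1)
      ≤ (ENNReal.ofReal (2 * c) * ENNReal.ofReal (ρ ^ n)) *
        volume (ball (0 : EuclideanSpace ℝ (Fin n)) 1) := mul_le_mul_left hcoef _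
    _ = ENNReal.ofReal (2 * c) * volume (ball (0 : EuclideanSpace ℝ (Fin n)) ρ) := by
        rw [Measure.addHaar_ball _ _ hρ0, finrank_euclideanSpace_fin, mul_assoc]
    _ = ∫⁻ y, Set.indicator (ball (0 : EuclideanSpace ℝ (Fin n)) ρ)
          (fun _ => ENNReal.ofReal (2 * c)) y ∂volume :=
        (lintegral_indicator_const measurableSet_ball _).symm
    _ ≤ ∫⁻ y, volume ((fun a => (a, y)) ⁻¹' ballSet n) ∂volume := lintegral_mono key

/-- The coordinate-splitting map is measure preserving. -/
lemma split_measurePreserving (n : ℕ) :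
    MeasurePreserving
      (fun x : EuclideanSpace ℝ (Fin (n + 1)) =>
        ((x 0, WithLp.toLp 2 (fun i : Fin n => x i.succ)) : ℝ × EuclideanSpace ℝ (Fin n)))
      volume ((volume : Measure ℝ).prod volume) := by
  have h1 : MeasurePreserving (MeasurableEquiv.toLp 2 (Fin (n + 1) → ℝ)).symm (volume : Measure (EuclideanSpace ℝ (Fin (n + 1)))) volume := EuclideanSpace.volume_preserving_symm_measurableEquiv_toLp (Fin (n + 1))
  have h2 : MeasurePreserving (MeasurableEquiv.piFinSuccAbove (fun _ : Fin (n + 1) => ℝ) 0) volume ((volume : Measure ℝ).prod volume) := volume_preserving_piFinSuccAbove (fun _ : Fin (n + 1) => ℝ) 0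
  have h3 := (MeasurePreserving.id (volume : Measure ℝ)).prod
    (EuclideanSpace.volume_preserving_symm_measurableEquiv_toLp (Fin n)).symm
  have := (h3.comp h2).comp h1
  convert this using 1
  rfl

lemma euclid_norm_sq {k : ℕ} (v : EuclideanSpace ℝ (Fin k)) :
    ‖v‖ ^ 2 = ∑ i, (v i) ^ 2 := by
  rw [EuclideanSpace.norm_eq, Real.sq_sqrt (by positivity)]
  simp [sq_abs]

lemma norm_split {n : ℕ} (x : EuclideanSpace ℝ (Fin (n + 1)))
    (y : EuclideanSpace ℝ (Fin n)) (hy : ∀ i, y i = x i.succ) :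
    ‖x‖ = Real.sqrt ((x 0) ^ 2 + ‖y‖ ^ 2) := by
  rw [← Real.sqrt_sq (norm_nonneg x)]
  congr 1
  rw [euclid_norm_sq, euclid_norm_sq]
  simp only [hy]
  rw [Fin.sum_univ_succ]

lemma mem_coneSet_iff {n : ℕ} (s t : ℝ) (x : EuclideanSpace ℝ (Fin (n + 1)))
    (y : EuclideanSpace ℝ (Fin n)) (hy : ∀ i, y i = x i.succ) :
    ((x 0, y) : ℝ × EuclideanSpace ℝ (Fin n)) ∈ coneSet n s t ↔
      (0 < ‖x‖ ∧ ‖x‖ < 1 ∧ s * ‖x‖ ≤ x 0 ∧ x 0 ≤ (s + t) * ‖x‖) := by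
  have h := (norm_split x y hy).symm
  simp only [coneSet, Set.mem_setOf_eq]
  rw [h]

lemma mem_ballSet_iff {n : ℕ} (x : EuclideanSpace ℝ (Fin (n + 1)))
    (y : EuclideanSpace ℝ (Fin n)) (hy : ∀ i, y i = x i.succ) :
    ((x 0, y) : ℝ × EuclideanSpace ℝ (Fin n)) ∈ ballSet n ↔ ‖x‖ < 1 := by
  have h := (norm_split x y hy).symm
  simp only [ballSet, Set.mem_setOf_eq]
  rw [h]

lemma pow_lower : ∀ n : ℕ, 4 ≤ n → 50 * (n + 1) ≤ 4 ^ n := by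
  intro n hn
  induction n, hn using Nat.le_induction with
  | base => norm_num
  | succ n hn ih =>
      have h4 : 4 ^ (n + 1) = 4 * 4 ^ n := by ring
      omega

end Aux

/-- The uniform probability measure on the unit sphere centered at the origin in `ℝ^d`,
viewed as a measure on the ambient space `EuclideanSpace ℝ (Fin d)`. -/
def unitSphereUnif (d : ℕ) : Measure (EuclideanSpace ℝ (Fin d)) :=
  ((volume : Measure (EuclideanSpace ℝ (Fin d))).toSphere Set.univ)⁻¹ •
    Measure.map Subtype.val (volume : Measure (EuclideanSpace ℝ (Fin d))).toSphere

/-- For a uniform point `z` on the unit sphere in `ℝ^d` (`d ≥ 5`) and a fixed unit vector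
`w`, the inner product `⟪w, z⟫` lands in any interval of length `t ≤ 1/(1370 d²)` with
probability at most `1/10` (Lemma `dot_product_probability_inside_interval`). -/
theorem dot_product_probability_inside_interval
    (d : ℕ) (hd : 5 ≤ d)
    (w : EuclideanSpace ℝ (Fin d)) (hw : ‖w‖ = 1)
    (t : ℝ) (ht0 : 0 ≤ t) (ht : t ≤ 1 / (1370 * (d : ℝ) ^ 2)) (s : ℝ) :
    unitSphereUnif d {z | ⟪w, z⟫ ∈ Set.Icc s (s + t)} ≤ ENNReal.ofReal (1 / 10) := by
  obtain ⟨n, rfl⟩ : ∃ n, d = n + 1 := ⟨d - 1, by omega⟩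
  have hn : 4 ≤ n := by omega
  set A : Set (EuclideanSpace ℝ (Fin (n + 1))) := {z | ⟪w, z⟫ ∈ Set.Icc s (s + t)} with hA
  have hinner : Continuous fun z : EuclideanSpace ℝ (Fin (n + 1)) => ⟪w, z⟫ :=
    continuous_const.inner continuous_id
  have hAmeas : MeasurableSet A := hinner.measurable measurableSet_Icc
  -- the cone over the spherical slab
  set C : Set (EuclideanSpace ℝ (Fin (n + 1))) :=
    {x | 0 < ‖x‖ ∧ ‖x‖ < 1 ∧ s * ‖x‖ ≤ ⟪w, x⟫ ∧ ⟪w, x⟫ ≤ (s + t) * ‖x‖} with hC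
  have hsmul : Ioo (0 : ℝ) 1 • ((sphere (0 : EuclideanSpace ℝ (Fin (n + 1))) 1) ∩ A) = C := by
    ext x
    constructor
    · rintro ⟨c, hc, z, ⟨hz1, hz2⟩, rfl⟩
      rw [mem_sphere_zero_iff_norm] at hz1
      obtain ⟨hs1, hs2⟩ : s ≤ ⟪w, z⟫ ∧ ⟪w, z⟫ ≤ s + t := hz2
      obtain ⟨hc0, hc1⟩ := hc
      have hnorm : ‖c • z‖ = c := by
        rw [norm_smul, hz1, mul_one, Real.norm_eq_abs, abs_of_pos hc0]
      have hinn : ⟪w, c • z⟫ = c * ⟪w, z⟫ := real_inner_smul_right _ _ _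
      refine ⟨by rw [hnorm]; exact hc0, by rw [hnorm]; exact hc1, ?_, ?_⟩
      · rw [hnorm, hinn]; nlinarith
      · rw [hnorm, hinn]; nlinarith
    · rintro ⟨h0, h1, h2, h3⟩
      refine ⟨‖x‖, ⟨h0, h1⟩, ‖x‖⁻¹ • x, ⟨?_, ?_⟩, ?_⟩
      · rw [mem_sphere_zero_iff_norm, norm_smul, Real.norm_eq_abs,
          abs_of_pos (inv_pos.2 h0), inv_mul_cancel₀ h0.ne']
      · have hinn : ⟪w, ‖x‖⁻¹ • x⟫ = ‖x‖⁻¹ * ⟪w, x⟫ := real_inner_smul_right _ _ _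
        constructor
        · rw [hinn, le_inv_mul_iff₀ h0, mul_comm]; exact h2
        · rw [hinn, inv_mul_le_iff₀ h0, mul_comm]; exact h3
      · show (‖x‖ : ℝ) • (‖x‖⁻¹ • x) = x
        rw [smul_smul, mul_inv_cancel₀ h0.ne', one_smul]
  -- rotate `w` to the first coordinate
  have hON : Orthonormal ℝ (Set.restrict {0} (fun _ : Fin (n + 1) => w)) := by
    refine ⟨fun i => hw, ?_⟩
    rintro ⟨i, hi⟩ ⟨j, hj⟩ hij
    simp only [Set.mem_singleton_iff] at hi hj
    exact absurd (Subtype.ext (hi.trans hj.symm)) hij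
  obtain ⟨b, hb⟩ := hON.exists_orthonormalBasis_extension_of_card_eq
    (by simp [finrank_euclideanSpace_fin])
  have hb0 : b 0 = w := hb 0 rfl
  have hrepr : ∀ x : EuclideanSpace ℝ (Fin (n + 1)), (b.repr x) 0 = ⟪w, x⟫ := by
    intro x; rw [b.repr_apply_apply, hb0]
  -- transfer to the product space
  set Φ : EuclideanSpace ℝ (Fin (n + 1)) → ℝ × EuclideanSpace ℝ (Fin n) :=
    fun x => (x 0, WithLp.toLp 2 (fun i : Fin n => x i.succ)) with hΦ
  have hΦmp : MeasurePreserving Φ volume ((volume : Measure ℝ).prod volume) :=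
    split_measurePreserving n
  have hCeq : C = b.repr ⁻¹' (Φ ⁻¹' coneSet n s t) := by
    ext x
    rw [Set.mem_preimage, Set.mem_preimage, hΦ]
    rw [mem_coneSet_iff s t (b.repr x) _ (fun i => rfl)]
    rw [b.repr.norm_map, hrepr x]
    rfl
  have hconeMeas : MeasurableSet (Φ ⁻¹' coneSet n s t) :=
    hΦmp.measurable (coneSet_measurable s t)
  have hCvol : volume C = (volume : Measure ℝ).prod volume (coneSet n s t) := by
    rw [hCeq, b.measurePreserving_repr.measure_preimage hconeMeas.nullMeasurableSet,
      hΦmp.measure_preimage (coneSet_measurable s t).nullMeasurableSet]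
  have hBvol : volume (ball (0 : EuclideanSpace ℝ (Fin (n + 1))) 1) =
      (volume : Measure ℝ).prod volume (ballSet n) := by
    have hBeq : ball (0 : EuclideanSpace ℝ (Fin (n + 1))) 1 = Φ ⁻¹' ballSet n := by
      ext x
      rw [Set.mem_preimage, hΦ, mem_ball_zero_iff]
      exact (mem_ballSet_iff x _ (fun i => rfl)).symm
    rw [hBeq, hΦmp.measure_preimage ballSet_measurable.nullMeasurableSet]
  -- the volume estimates
  haveI : Nontrivial (EuclideanSpace ℝ (Fin n)) := by
    rw [← Module.finrank_pos_iff (R := ℝ), finrank_euclideanSpace_fin]; omega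
  set Vn := volume (ball (0 : EuclideanSpace ℝ (Fin n)) 1) with hVn
  have hupper : volume C ≤ (ENNReal.ofReal (2 * (4⁻¹:ℝ) ^ n) + ENNReal.ofReal (32 * t)) * Vn := by
    rw [hCvol]
    refine (cone_vol_le s t ht0 (slice_bound s t ht0)).trans ?_
    rw [Measure.addHaar_ball _ _ (by norm_num : (0:ℝ) ≤ 4⁻¹), finrank_euclideanSpace_fin,
      add_mul, ← hVn]
    apply le_of_eq
    rw [ENNReal.ofReal_mul (by norm_num : (0:ℝ) ≤ (2:ℝ)),
      show ENNReal.ofReal (2:ℝ) = 2 by norm_num]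
    ring
  have hlower : ENNReal.ofReal (2 / ((n : ℝ) + 1)) * Vn ≤
      volume (ball (0 : EuclideanSpace ℝ (Fin (n + 1))) 1) := by
    rw [hBvol]; exact ball_vol_lower (by omega)
  -- coefficient comparison
  have hdR : (5:ℝ) ≤ (n : ℝ) + 1 := by
    have h5 : (5:ℕ) ≤ n + 1 := by omega
    exact_mod_cast h5
  have hcoef : ENNReal.ofReal (2 * (4⁻¹:ℝ) ^ n) + ENNReal.ofReal (32 * t) ≤
      ENNReal.ofReal (1 / 10) * ENNReal.ofReal (2 / ((n : ℝ) + 1)) := by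
    rw [← ENNReal.ofReal_add (by positivity) (by positivity),
      ← ENNReal.ofReal_mul (by norm_num)]
    apply ENNReal.ofReal_le_ofReal
    set dR : ℝ := (n : ℝ) + 1 with hdR'
    have hdpos : (0:ℝ) < dR := by rw [hdR']; positivity
    have h50 : 50 * dR ≤ 4 ^ n := by
      have h1 := pow_lower n hn
      have h2 : ((50 * (n + 1) : ℕ) : ℝ) ≤ ((4 ^ n : ℕ) : ℝ) := by exact_mod_cast h1
      push_cast at h2
      rw [hdR']; linarith
    have h4pos : (0:ℝ) < 4 ^ n := by positivity
    have ha : 2 * (4⁻¹:ℝ) ^ n ≤ 1 / (25 * dR) := by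
      rw [inv_pow, ← one_div, mul_one_div, div_le_div_iff₀ h4pos (by positivity)]
      nlinarith
    have hb2 : 32 * t ≤ 32 / (1370 * dR ^ 2) := by
      have htt : t ≤ 1 / (1370 * dR ^ 2) := by
        convert ht using 3
        rw [hdR']
        push_cast
        ring
      rw [div_eq_mul_inv, ← one_div]
      nlinarith
    have hkey : 1 / (25 * dR) + 32 / (1370 * dR ^ 2) ≤ 1 / 10 * (2 / dR) := by
      rw [div_add_div _ _ (by positivity) (by positivity),
        show (1:ℝ) / 10 * (2 / dR) = 2 / (10 * dR) by rw [div_mul_div_comm]; norm_num,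
        div_le_div_iff₀ (by positivity) (by positivity)]
      nlinarith
    linarith
  have hfinal : volume C ≤ ENNReal.ofReal (1 / 10) *
      volume (ball (0 : EuclideanSpace ℝ (Fin (n + 1))) 1) := by
    calc volume C ≤ (ENNReal.ofReal (2 * (4⁻¹:ℝ) ^ n) + ENNReal.ofReal (32 * t)) * Vn := hupper
      _ ≤ (ENNReal.ofReal (1 / 10) * ENNReal.ofReal (2 / ((n : ℝ) + 1))) * Vn :=
          mul_le_mul_left hcoef _
      _ = ENNReal.ofReal (1 / 10) * (ENNReal.ofReal (2 / ((n : ℝ) + 1)) * Vn) := by ring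
      _ ≤ _ := mul_le_mul_right hlower _
  -- unfold the sphere measure
  have hvalmeas : MeasurableSet (Subtype.val ⁻¹' A :
      Set (sphere (0 : EuclideanSpace ℝ (Fin (n + 1))) 1)) :=
    measurable_subtype_coe hAmeas
  rw [unitSphereUnif, Measure.smul_apply, smul_eq_mul,
    Measure.map_apply measurable_subtype_coe hAmeas,
    Measure.toSphere_apply' _ hvalmeas, Measure.toSphere_apply_univ,
    Subtype.image_preimage_coe, hsmul, finrank_euclideanSpace_fin]
  set V := volume (ball (0 : EuclideanSpace ℝ (Fin (n + 1))) 1) with hV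
  have hV0 : V ≠ 0 := (measure_ball_pos volume _ one_pos).ne'
  have hVtop : V ≠ ⊤ := measure_ball_lt_top.ne
  have hD0 : ((n + 1 : ℕ) : ℝ≥0∞) ≠ 0 := by simp
  have hDtop : ((n + 1 : ℕ) : ℝ≥0∞) ≠ ⊤ := ENNReal.natCast_ne_top _
  calc (((n + 1 : ℕ) : ℝ≥0∞) * V)⁻¹ * (((n + 1 : ℕ) : ℝ≥0∞) * volume C)
      ≤ (((n + 1 : ℕ) : ℝ≥0∞) * V)⁻¹ *
        (((n + 1 : ℕ) : ℝ≥0∞) * (ENNReal.ofReal (1 / 10) * V)) := by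
        exact mul_le_mul_right (mul_le_mul_right hfinal _) _
    _ = ENNReal.ofReal (1 / 10) * ((((n + 1 : ℕ) : ℝ≥0∞) * V)⁻¹ *
        ((((n + 1 : ℕ) : ℝ≥0∞)) * V)) := by ring
    _ = ENNReal.ofReal (1 / 10) := by
        rw [ENNReal.inv_mul_cancel (mul_ne_zero hD0 hV0) (ENNReal.mul_ne_top hDtop hVtop),
          mul_one]

end
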